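/- Let K be a totally real number field, r ≥ 5 a rational prime, d ∈ O_K \ {0} odd, K⁺ = K(ζ_r + ζ_r⁻¹), and let P be a prime ideal of O_{K⁺} lying above 2. Let p be a rational prime with p > 4·v_P(2), and let (a, b, c) ∈ O_{K⁺}³ be a nontrivial primitive solution of a^r + b^r = d·c^p with P | c. Choose 0 ≤ k₁ < k₂ < k₃ ≤ (r−1)/2 with P | f_{k₁}(a, b), and let A = α·f_{k₁}(a, b), B = β·f_{k₂}(a, b), C = γ·f_{k₃}(a, b) and j = 2⁸·(A·B + B·C + C·A)³ / (A·B·C)². Then v_P(j) < 0 and p ∤ v_P(j). -/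

import Mathlib

open IsDedekindDomain NumberField

-- The additive `P`-adic valuation on a number field `F`, normalized so that a uniformizer
-- has valuation `1`; by convention `vP P 0 = 0`.
open scoped Classical in
noncomputable def vP {F : Type*} [Field F] [NumberField F]
    (P : HeightOneSpectrum (𝓞 F)) (x : F) : ℤ :=
  if hx : x = 0 then 0
  else - Multiplicative.toAdd (WithZero.unzero ((Valuation.ne_zero_iff (P.valuation F)).mpr hx))

-- A number field is totally real if all its infinite places are real.
def TotallyReal (F : Type*) [Field F] [NumberField F] : Prop :=
  ∀ v : NumberField.InfinitePlace F, v.IsReal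


section API
variable {F : Type*} [Field F] [NumberField F] (P : HeightOneSpectrum (𝓞 F))

lemma vP_val {x : F} (hx : x ≠ 0) :
    P.valuation F x = ((Multiplicative.ofAdd (-(vP P x)) : Multiplicative ℤ) : WithZero (Multiplicative ℤ)) := by
  rw [vP, dif_neg hx, neg_neg, ofAdd_toAdd, WithZero.coe_unzero]

lemma vP_eq_of_val {x : F} (hx : x ≠ 0) {m : ℤ}
    (h : P.valuation F x = ((Multiplicative.ofAdd (-m) : Multiplicative ℤ) : WithZero (Multiplicative ℤ))) :
    vP P x = m := by
  have h2 := vP_val P hx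
  rw [h] at h2
  have := WithZero.coe_inj.mp h2
  simpa using (Multiplicative.ofAdd.injective this).symm

lemma vP_one : vP P (1 : F) = 0 :=
  vP_eq_of_val P one_ne_zero (by simp)

lemma vP_mul {x y : F} (hx : x ≠ 0) (hy : y ≠ 0) :
    vP P (x * y) = vP P x + vP P y := by
  apply vP_eq_of_val P (mul_ne_zero hx hy)
  rw [Valuation.map_mul, vP_val P hx, vP_val P hy, ← WithZero.coe_mul, ← ofAdd_add]
  ring_nf

lemma vP_pow {x : F} (hx : x ≠ 0) (n : ℕ) : vP P (x ^ n) = n * vP P x := by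
  induction n with
  | zero => simpa using vP_one P
  | succ n ih =>
      rw [pow_succ, vP_mul P (pow_ne_zero n hx) hx, ih]
      push_cast; ring

lemma vP_div {x y : F} (hx : x ≠ 0) (hy : y ≠ 0) :
    vP P (x / y) = vP P x - vP P y := by
  have h := vP_mul P (div_ne_zero hx hy) hy
  rw [div_mul_cancel₀ _ hy] at h
  omega

lemma vP_nonneg {x : 𝓞 F} (hx : x ≠ 0) : 0 ≤ vP P (algebraMap (𝓞 F) F x) := by
  have h : P.valuation F (algebraMap (𝓞 F) F x) ≤ 1 := P.valuation_le_one (K := F) x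
  rw [vP_val P (RingOfIntegers.coe_ne_zero_iff.mpr hx)] at h
  rw [show (1 : WithZero (Multiplicative ℤ)) = ((Multiplicative.ofAdd (0:ℤ) : Multiplicative ℤ) : WithZero (Multiplicative ℤ)) by simp] at h
  rw [WithZero.coe_le_coe, Multiplicative.ofAdd_le] at h
  omega

lemma vP_pos_iff {x : 𝓞 F} (hx : x ≠ 0) :
    0 < vP P (algebraMap (𝓞 F) F x) ↔ x ∈ P.asIdeal := by
  rw [← Ideal.dvd_span_singleton, ← show P.valuation F (algebraMap (𝓞 F) F x) < 1 ↔ _ from P.valuation_lt_one_iff_dvd (K := F) x,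
    vP_val P (RingOfIntegers.coe_ne_zero_iff.mpr hx),
    show (1 : WithZero (Multiplicative ℤ)) = ((Multiplicative.ofAdd (0:ℤ) : Multiplicative ℤ) : WithZero (Multiplicative ℤ)) by simp,
    WithZero.coe_lt_coe, Multiplicative.ofAdd_lt]
  omega

lemma vP_eq_zero_of_not_mem {x : 𝓞 F} (hx : x ≠ 0) (h : x ∉ P.asIdeal) :
    vP P (algebraMap (𝓞 F) F x) = 0 := by
  have h1 := vP_nonneg P hx
  have h2 := (vP_pos_iff P hx).not.mpr h
  omega

lemma vP_prod {ι : Type*} (t : Finset ι) (f : ι → F) (h : ∀ i ∈ t, f i ≠ 0) :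
    vP P (∏ i ∈ t, f i) = ∑ i ∈ t, vP P (f i) := by
  induction t using Finset.cons_induction with
  | empty => simpa using vP_one P
  | cons i t hi ih =>
      rw [Finset.prod_cons, Finset.sum_cons,
        vP_mul P (h i (Finset.mem_cons_self i t))
          (Finset.prod_ne_zero_iff.mpr fun j hj => h j (Finset.mem_cons_of_mem hj)),
        ih fun j hj => h j (Finset.mem_cons_of_mem hj)]

end API

section Cyclo
open Polynomial Finset
variable {L : Type*} [Field L] {r : ℕ} {ζ : L}

lemma prod_range_eq (hζ : IsPrimitiveRoot ζ r) (hr : 0 < r) :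
    (X ^ r - 1 : L[X]) = ∏ i ∈ range r, (X - C (ζ ^ i)) := by
  classical
  rw [X_pow_sub_one_eq_prod hr hζ]
  have himg : Finset.image (ζ ^ ·) (range r) = nthRootsFinset r (1 : L) := by
    apply Finset.eq_of_subset_of_card_le
    · intro x hx
      simp only [Finset.mem_image, Finset.mem_range] at hx
      obtain ⟨i, hi, rfl⟩ := hx
      rw [mem_nthRootsFinset hr, ← pow_mul, mul_comm, pow_mul, hζ.pow_eq_one, one_pow]
    · rw [hζ.card_nthRootsFinset, Finset.card_image_of_injOn hζ.injOn_pow, Finset.card_range]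
  rw [← himg, Finset.prod_image]
  intro x hx y hy h
  exact hζ.injOn_pow (by simpa using hx) (by simpa using hy) h

lemma r_eq_prod (hζ : IsPrimitiveRoot ζ r) (hr1 : 1 < r) :
    ((r : L)) = ∏ i ∈ Finset.Ico 1 r, (1 - ζ ^ i) := by
  have h1 : (X ^ r - 1 : L[X]) =
      (X - C (1 : L)) * ∏ i ∈ Finset.Ico 1 r, (X - C (ζ ^ i)) := by
    rw [prod_range_eq hζ (by omega), Finset.range_eq_Ico,
      Finset.prod_eq_prod_Ico_succ_bot (by omega : (0:ℕ) < r)]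
    simp
  have h2 : (X ^ r - 1 : L[X]) = (X - C (1 : L)) * (∑ i ∈ range r, X ^ i) := by
    have h := geom_sum_mul (X : L[X]) r
    rw [← h, mul_comm]
    simp
  have h3 : (∑ i ∈ range r, (X : L[X]) ^ i) = ∏ i ∈ Finset.Ico 1 r, (X - C (ζ ^ i)) :=
    mul_left_cancel₀ (X_sub_C_ne_zero 1) (h2.symm.trans h1)
  have h4 := congrArg (Polynomial.eval (1 : L)) h3
  simpa [Polynomial.eval_prod, Polynomial.eval_finset_sum] using h4

lemma pow_add_pow_eq (hζ : IsPrimitiveRoot ζ r) {s : ℕ} (hs : r = 2 * s + 1) (hr1 : 1 < r)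
    (α β : L) (hβ : β ≠ 0) :
    α ^ r + β ^ r =
      (α + β) * ∏ k ∈ Finset.Ico 1 (s + 1), (α ^ 2 + (ζ ^ k + ζ⁻¹ ^ k) * α * β + β ^ 2) := by
  have hζ0 : ζ ≠ 0 := by
    intro h
    have := hζ.pow_eq_one
    rw [h, zero_pow (by omega)] at this
    exact zero_ne_one this
  have hodd : Odd r := ⟨s, by omega⟩
  have step1 : α ^ r + β ^ r = ∏ i ∈ range r, (α + ζ ^ i * β) := by
    have h := congrArg (Polynomial.eval (-α / β)) (prod_range_eq hζ (by omega))
    simp only [Polynomial.eval_sub, Polynomial.eval_pow, Polynomial.eval_X, Polynomial.eval_one,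
      Polynomial.eval_prod, Polynomial.eval_C] at h
    have h2 := congrArg (· * (-β) ^ r) h
    rw [sub_mul, ← mul_pow,
      show ((-β : L)) ^ r = ∏ _i ∈ range r, (-β) by simp [Finset.prod_const],
      ← Finset.prod_mul_distrib,
      show -α / β * -β = α by field_simp] at h2
    have hbr : (∏ _i ∈ range r, (-β : L)) = -β ^ r := by
      simp [Finset.prod_const, hodd.neg_pow]
    rw [hbr] at h2
    calc α ^ r + β ^ r = α ^ r - 1 * -β ^ r := by ring
      _ = _ := by
          rw [h2]
          apply Finset.prod_congr rfl
          intro i _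
          field_simp
          ring
  have hs1 : 1 ≤ s := by omega
  rw [step1, Finset.range_eq_Ico, Finset.prod_eq_prod_Ico_succ_bot (show 0 < r by omega)]
  simp only [pow_zero, one_mul]
  congr 1
  rw [← Finset.prod_Ico_consecutive _ (show 1 ≤ s + 1 by omega) (show s + 1 ≤ r by omega)]
  have hsecond : ∏ i ∈ Finset.Ico (s + 1) r, (α + ζ ^ i * β)
      = ∏ k ∈ Finset.Ico 1 (s + 1), (α + ζ ^ (r - k) * β) := by
    refine Finset.prod_bij' (fun i _ => r - i) (fun k _ => r - k) ?_ ?_ ?_ ?_ ?_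
    · intro i hi
      simp only [Finset.mem_Ico] at hi
      show r - i ∈ Finset.Ico 1 (s + 1)
      simp only [Finset.mem_Ico]
      omega
    · intro k hk
      simp only [Finset.mem_Ico] at hk
      show r - k ∈ Finset.Ico (s + 1) r
      simp only [Finset.mem_Ico]
      omega
    · intro i hi
      simp only [Finset.mem_Ico] at hi
      show r - (r - i) = i
      omega
    · intro k hk
      simp only [Finset.mem_Ico] at hk
      show r - (r - k) = k
      omega
    · intro i hi
      simp only [Finset.mem_Ico] at hi
      rw [show r - (r - i) = i by omega]
  rw [hsecond, ← Finset.prod_mul_distrib]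
  apply Finset.prod_congr rfl
  intro k hk
  simp only [Finset.mem_Ico] at hk
  have hk1 : ζ ^ (r - k) * ζ ^ k = 1 := by
    rw [← pow_add, show r - k + k = r by omega, hζ.pow_eq_one]
  have hk2 : ζ ^ (r - k) = ζ⁻¹ ^ k := by
    rw [inv_pow]
    exact eq_inv_of_mul_eq_one_left hk1
  rw [hk2]
  have h3 : ζ ^ k * ζ⁻¹ ^ k = 1 := by
    rw [← mul_pow, mul_inv_cancel₀ hζ0, one_pow]
  linear_combination β ^ 2 * h3

end Cyclo


set_option maxHeartbeats 4000000 in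
set_option synthInstance.maxHeartbeats 400000 in
/-- Lemma 3.13 of the paper. -/
theorem frey_jinvariant_valuation_at_2
    (K : Type*) [Field K] [NumberField K] (hK : TotallyReal K)
    (r : ℕ) (hr : r.Prime) (hr5 : 5 ≤ r)
    (d : 𝓞 K) (hd0 : d ≠ 0)
    -- `d` is odd: no prime of `K` above `2` divides `d`
    (hdodd : ∀ Q : HeightOneSpectrum (𝓞 K), (2 : 𝓞 K) ∈ Q.asIdeal → d ∉ Q.asIdeal)
    -- `L = K(ζ_r)` where `ζ` is a primitive `r`-th root of unity
    (L : Type*) [Field L] [NumberField L] [Algebra K L]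
    (ζ : L) (hζ : IsPrimitiveRoot ζ r)
    (hL : IntermediateField.adjoin K {ζ} = ⊤)
    -- `K⁺ = K(ζ_r + ζ_r⁻¹)`
    (Kp : IntermediateField K L)
    (hKp : Kp = IntermediateField.adjoin K {ζ + ζ⁻¹})
    -- `dp` is the image of `d` in `𝓞 K⁺`, and `e k` is `ζ^k + ζ^{−k}` as an element of `𝓞 K⁺`
    (dp : 𝓞 Kp) (hdp : ((dp : Kp) : L) = algebraMap K L (d : K))
    (e : ℕ → 𝓞 Kp) (he : ∀ k : ℕ, ((e k : Kp) : L) = ζ ^ k + ζ⁻¹ ^ k)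
    -- `P` is a prime of `K⁺` lying above `2`
    (P : HeightOneSpectrum (𝓞 Kp)) (hP2 : (2 : 𝓞 Kp) ∈ P.asIdeal)
    -- `p` is a rational prime with `p > 4·v_P(2)`
    (p : ℕ) (hp : p.Prime) (hp4 : 4 * vP P (2 : Kp) < (p : ℤ))
    -- `(a, b, c)` is a nontrivial primitive solution of `a^r + b^r = d·c^p` with `P ∣ c`
    (a b c : 𝓞 Kp)
    (heq : a ^ r + b ^ r = dp * c ^ p)
    (hnt : a * b * c ≠ 0)
    (hprim : Ideal.span {a, b, c} = ⊤)
    (hPc : c ∈ P.asIdeal)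
    -- `0 ≤ k₁ < k₂ < k₃ ≤ (r−1)/2` with `P ∣ f_{k₁}(a, b)`
    (k₁ k₂ k₃ : ℕ) (h12 : k₁ < k₂) (h23 : k₂ < k₃) (h3 : k₃ ≤ (r - 1) / 2)
    (hPf : a ^ 2 + e k₁ * a * b + b ^ 2 ∈ P.asIdeal)
    -- `A = α·f_{k₁}(a,b)`, `B = β·f_{k₂}(a,b)`, `C = γ·f_{k₃}(a,b)`
    (A B C : 𝓞 Kp)
    (hA : A = (e k₃ - e k₂) * (a ^ 2 + e k₁ * a * b + b ^ 2))
    (hB : B = (e k₁ - e k₃) * (a ^ 2 + e k₂ * a * b + b ^ 2))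
    (hC : C = (e k₂ - e k₁) * (a ^ 2 + e k₃ * a * b + b ^ 2))
    -- `j` is the `j`-invariant of the Frey curve `Y² = X(X − A)(X + B)`
    (j : Kp)
    (hj : j = 2 ^ 8 * ((A * B + B * C + C * A : 𝓞 Kp) : Kp) ^ 3 /
      ((A * B * C : 𝓞 Kp) : Kp) ^ 2) :
    vP P j < 0 ∧ ¬ (p : ℤ) ∣ vP P j := by
    classical
  -- basic setup
  have hrodd : Odd r := hr.odd_of_ne_two (by omega)
  have hrodd' : r % 2 = 1 := Nat.odd_iff.mp hrodd
  obtain ⟨s, hs⟩ : ∃ s, r = 2 * s + 1 := ⟨r / 2, by omega⟩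
  have hs2 : 2 ≤ s := by omega
  have h3s : k₃ ≤ s := by omega
  have h2s : k₂ ≤ s := by omega
  have ha0 : a ≠ 0 := fun h => hnt (by simp [h])
  have hb0 : b ≠ 0 := fun h => hnt (by simp [h])
  have hc0 : c ≠ 0 := fun h => hnt (by simp [h])
  have hζ0 : ζ ≠ 0 := by
    intro h
    have := hζ.pow_eq_one
    rw [h, zero_pow (by omega)] at this
    exact zero_ne_one this
  have hKpLinj : Function.Injective (algebraMap Kp L) := (algebraMap Kp L).injective
  set ψ : 𝓞 Kp →+* L := (algebraMap Kp L).comp (algebraMap (𝓞 Kp) Kp) with hψdef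
  have hψinj : Function.Injective ψ :=
    hKpLinj.comp RingOfIntegers.coe_injective
  have hψe : ∀ k : ℕ, ψ (e k) = ζ ^ k + ζ⁻¹ ^ k := fun k => he k
  have hPne : P.asIdeal ≠ ⊤ := P.isPrime.ne_top
  -- if an odd natural number lies in P, contradiction
  have hoddP : ∀ m : ℕ, Odd m → ((m : 𝓞 Kp) ∈ P.asIdeal) → False := by
    intro m hm hmem
    have h2 : IsCoprime (2 : ℤ) (m : ℤ) := by
      rw [Int.isCoprime_iff_gcd_eq_one]
      have : Nat.Coprime 2 m := Nat.coprime_two_left.mpr hm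
      simpa [Int.gcd] using this
    obtain ⟨u, v, huv⟩ := h2
    have h1P : (1 : 𝓞 Kp) ∈ P.asIdeal := by
      have hcast : (u : 𝓞 Kp) * 2 + (v : 𝓞 Kp) * (m : 𝓞 Kp) = 1 := by
        have := congrArg (fun t : ℤ => (t : 𝓞 Kp)) huv
        push_cast at this
        simpa using this
      rw [← hcast]
      exact Ideal.add_mem _ (Ideal.mul_mem_left _ _ hP2) (Ideal.mul_mem_left _ _ hmem)
    exact hPne ((Ideal.eq_top_iff_one _).mpr h1P)
  -- dp facts
  have hdp0 : dp ≠ 0 := by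
    intro h
    have h0 : algebraMap K L (d : K) = 0 := by rw [← hdp, h]; simp
    rw [map_eq_zero] at h0
    exact hd0 (RingOfIntegers.coe_eq_zero_iff.mp h0)
  have hdpP : dp ∉ P.asIdeal := by
    intro hmem
    set φ : 𝓞 K →+* 𝓞 Kp := RingOfIntegers.mapRingHom (algebraMap K Kp) with hφdef
    have hφd : φ d = dp := by
      apply RingOfIntegers.coe_injective
      apply hKpLinj
      show algebraMap Kp L (algebraMap (𝓞 Kp) Kp (φ d)) = algebraMap Kp L (algebraMap (𝓞 Kp) Kp dp)
      have h1 : algebraMap (𝓞 Kp) Kp (φ d) = algebraMap K Kp (algebraMap (𝓞 K) K d) := rfl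
      rw [h1, ← IsScalarTower.algebraMap_apply K Kp L]
      exact hdp.symm
    have hQp : (Ideal.comap φ P.asIdeal).IsPrime := Ideal.IsPrime.comap φ
    have h2m : (2 : 𝓞 K) ∈ Ideal.comap φ P.asIdeal := by
      have h2 : φ 2 = 2 := map_ofNat φ 2
      rw [Ideal.mem_comap, h2]
      exact hP2
    have hQb : Ideal.comap φ P.asIdeal ≠ ⊥ := by
      intro hbot
      rw [hbot, Ideal.mem_bot] at h2m
      exact two_ne_zero h2m
    exact hdodd ⟨Ideal.comap φ P.asIdeal, hQp, hQb⟩ h2m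
      (Ideal.mem_comap.mpr (by rw [hφd]; exact hmem))
  -- a, b not in P
  have haP : a ∉ P.asIdeal := by
    intro ha
    have hcp : c ^ p ∈ P.asIdeal := Ideal.pow_mem_of_mem _ hPc p hp.pos
    have hsum : a ^ r + b ^ r ∈ P.asIdeal := heq ▸ Ideal.mul_mem_left _ _ hcp
    have har : a ^ r ∈ P.asIdeal := Ideal.pow_mem_of_mem _ ha r hr.pos
    have hbr : b ^ r ∈ P.asIdeal := by
      have := Ideal.sub_mem _ hsum har
      simpa using this
    have hb : b ∈ P.asIdeal := P.isPrime.mem_of_pow_mem _ hbr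
    have hle : (⊤ : Ideal (𝓞 Kp)) ≤ P.asIdeal := by
      rw [← hprim]
      apply Ideal.span_le.mpr
      intro x hx
      simp only [Set.mem_insert_iff, Set.mem_singleton_iff] at hx
      rcases hx with rfl | rfl | rfl
      exacts [ha, hb, hPc]
    exact hPne (top_le_iff.mp hle)
  have hbP : b ∉ P.asIdeal := by
    intro hb
    have hcp : c ^ p ∈ P.asIdeal := Ideal.pow_mem_of_mem _ hPc p hp.pos
    have hsum : a ^ r + b ^ r ∈ P.asIdeal := heq ▸ Ideal.mul_mem_left _ _ hcp
    have hbr : b ^ r ∈ P.asIdeal := Ideal.pow_mem_of_mem _ hb r hr.pos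
    have har : a ^ r ∈ P.asIdeal := by
      have := Ideal.sub_mem _ hsum hbr
      simpa using this
    have ha : a ∈ P.asIdeal := P.isPrime.mem_of_pow_mem _ har
    have hle : (⊤ : Ideal (𝓞 Kp)) ≤ P.asIdeal := by
      rw [← hprim]
      apply Ideal.span_le.mpr
      intro x hx
      simp only [Set.mem_insert_iff, Set.mem_singleton_iff] at hx
      rcases hx with rfl | rfl | rfl
      exacts [ha, hb, hPc]
    exact hPne (top_le_iff.mp hle)
  have habP : a * b ∉ P.asIdeal := fun h => (P.isPrime.mem_or_mem h).elim haP hbP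
  -- key unit fact
  have hζmem : ζ ∈ integralClosure ℤ L :=
    IsIntegral.of_pow (show 0 < r by omega) (hζ.pow_eq_one ▸ isIntegral_one)
  have hkey : ∀ k k' : ℕ, k' < k → k ≤ s → (e k - e k') ∉ P.asIdeal := by
    intro k k' hlt hks hmem
    have hc1 : ζ ^ (k - k') * ζ ^ k' = ζ ^ k := by
      rw [← pow_add]; congr 1; omega
    have hc2 : ζ ^ (r - (k + k')) * (ζ ^ k * ζ ^ k') = 1 := by
      rw [← pow_add, ← pow_add, show r - (k + k') + (k + k') = r by omega, hζ.pow_eq_one]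
    have hik : ζ⁻¹ ^ k * ζ ^ k = 1 := by rw [← mul_pow, inv_mul_cancel₀ hζ0, one_pow]
    have hik' : ζ⁻¹ ^ k' * ζ ^ k' = 1 := by rw [← mul_pow, inv_mul_cancel₀ hζ0, one_pow]
    have hxL : ψ (e k - e k')
        = -(ζ ^ k') * ((1 - ζ ^ (k - k')) * (1 - ζ ^ (r - (k + k')))) := by
      rw [map_sub, hψe, hψe]
      apply mul_right_cancel₀ (b := ζ ^ k * ζ ^ k')
        (mul_ne_zero (pow_ne_zero _ hζ0) (pow_ne_zero _ hζ0))
      linear_combination ζ ^ k' * hik - ζ ^ k * hik' + (1 - ζ ^ k * ζ ^ k') * hc1 +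
        (ζ ^ (k - k') * ζ ^ k' - ζ ^ k') * hc2
    have hrL : ((r : ℕ) : L) = ∏ i ∈ Finset.Ico 1 r, (1 - ζ ^ i) := r_eq_prod hζ (by omega)
    have hmem1 : (k - k') ∈ Finset.Ico 1 r := by
      simp only [Finset.mem_Ico]; omega
    have hmem2 : (r - (k + k')) ∈ Finset.Ico 1 r := by
      simp only [Finset.mem_Ico]; omega
    set Pi1 : L := ∏ i ∈ (Finset.Ico 1 r).erase (k - k'), (1 - ζ ^ i) with hPi1
    set Pi2 : L := ∏ i ∈ (Finset.Ico 1 r).erase (r - (k + k')), (1 - ζ ^ i) with hPi2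
    have hsplit1 : ((r : ℕ) : L) = (1 - ζ ^ (k - k')) * Pi1 := by
      rw [hrL]; exact (Finset.mul_prod_erase _ _ hmem1).symm
    have hsplit2 : ((r : ℕ) : L) = (1 - ζ ^ (r - (k + k'))) * Pi2 := by
      rw [hrL]; exact (Finset.mul_prod_erase _ _ hmem2).symm
    have hc3 : ζ ^ k' * ζ ^ (r - k') = 1 := by
      rw [← pow_add, show k' + (r - k') = r by omega, hζ.pow_eq_one]
    set w : L := -(ζ ^ (r - k')) * (Pi1 * Pi2) with hw
    have hfac : ψ (e k - e k') * w = ((r : ℕ) : L) ^ 2 := by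
      calc ψ (e k - e k') * w
          = (ζ ^ k' * ζ ^ (r - k')) *
            (((1 - ζ ^ (k - k')) * Pi1) * ((1 - ζ ^ (r - (k + k'))) * Pi2)) := by
            rw [hxL, hw]; ring
        _ = ((r : ℕ) : L) ^ 2 := by rw [hc3, one_mul, ← hsplit1, ← hsplit2, sq]
    have hrL0 : ((r : ℕ) : L) ≠ 0 := Nat.cast_ne_zero.mpr (by omega)
    have hx0 : e k - e k' ≠ 0 := by
      intro h
      rw [h, map_zero, zero_mul] at hfac
      exact hrL0 (pow_eq_zero_iff (n := 2) (by norm_num) |>.mp hfac.symm)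
    have hwmem : w ∈ integralClosure ℤ L := by
      refine mul_mem (neg_mem (pow_mem hζmem _)) (mul_mem ?_ ?_) <;>
        exact prod_mem (fun i _ => sub_mem (one_mem _) (pow_mem hζmem i))
    have hψxne : ψ (e k - e k') ≠ 0 := fun h => hx0 (hψinj (by rw [h, map_zero]))
    have hxKp0 : algebraMap (𝓞 Kp) Kp (e k - e k') ≠ 0 := RingOfIntegers.coe_ne_zero_iff.mpr hx0
    set q : Kp := ((r : ℕ) : Kp) ^ 2 / algebraMap (𝓞 Kp) Kp (e k - e k') with hq
    have hqL : algebraMap Kp L q = w := by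
      rw [hq, map_div₀, map_pow]
      rw [show algebraMap Kp L ((r : ℕ) : Kp) = ((r : ℕ) : L) from map_natCast _ r]
      rw [show algebraMap Kp L (algebraMap (𝓞 Kp) Kp (e k - e k')) = ψ (e k - e k') from rfl]
      rw [← hfac, mul_comm]
      exact mul_div_cancel_right₀ w hψxne
    have hqint : q ∈ integralClosure ℤ Kp :=
      (isIntegral_algebraMap_iff hKpLinj).mp (by rw [hqL]; exact hwmem)
    set y : 𝓞 Kp := ⟨q, hqint⟩ with hy
    have hxy : (e k - e k') * y = ((r : ℕ) : 𝓞 Kp) ^ 2 := by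
      apply RingOfIntegers.coe_injective
      rw [map_mul, map_pow, map_natCast]
      show algebraMap (𝓞 Kp) Kp (e k - e k') * q = ((r : ℕ) : Kp) ^ 2
      rw [hq, mul_div_cancel₀ _ hxKp0]
    have hr2P : ((r : ℕ) : 𝓞 Kp) ^ 2 ∈ P.asIdeal := hxy ▸ Ideal.mul_mem_right _ _ hmem
    apply hoddP (r ^ 2) (hrodd.pow)
    push_cast
    exact hr2P
  -- e 0 = 2
  have he0 : e 0 = 2 := by
    apply hψinj
    rw [hψe 0, map_ofNat]
    norm_num
  have hsq0 : a ^ 2 + e 0 * a * b + b ^ 2 = (a + b) ^ 2 := by rw [he0]; ring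
  -- the symmetric key fact
  have hkey' : ∀ k k' : ℕ, k ≠ k' → k ≤ s → k' ≤ s → (e k - e k') ∉ P.asIdeal := by
    intro k k' hne hk hk' hmem
    rcases lt_or_gt_of_ne hne with h | h
    · refine hkey k' k h hk' ?_
      have hflip : e k' - e k = -(e k - e k') := by ring
      rw [hflip]
      exact neg_mem hmem
    · exact hkey k k' h hk hmem
  -- nonzero from non-membership
  have hne_of_not : ∀ x : 𝓞 Kp, x ∉ P.asIdeal → x ≠ 0 := by
    intro x h h0
    exact h (h0 ▸ P.asIdeal.zero_mem)
  -- factorization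
  have hψb0 : ψ b ≠ 0 := fun h => hb0 (hψinj (by rw [h, map_zero]))
  have hmapF : ∀ k : ℕ, ψ (a ^ 2 + e k * a * b + b ^ 2)
      = (ψ a) ^ 2 + (ζ ^ k + ζ⁻¹ ^ k) * ψ a * ψ b + (ψ b) ^ 2 := by
    intro k
    simp only [map_add, map_mul, map_pow, hψe]
  have hfact : a ^ r + b ^ r
      = (a + b) * ∏ k ∈ Finset.Ico 1 (s + 1), (a ^ 2 + e k * a * b + b ^ 2) := by
    apply hψinj
    rw [map_add ψ, map_pow, map_pow, map_mul, map_add, map_prod ψ]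
    simp only [hmapF]
    exact pow_add_pow_eq hζ hs (by omega) (ψ a) (ψ b) hψb0
  have hkeyeq : (a + b) * ∏ k ∈ Finset.Ico 1 (s + 1), (a ^ 2 + e k * a * b + b ^ 2)
      = dp * c ^ p := hfact.symm.trans heq
  have hrhs0 : dp * c ^ p ≠ 0 := mul_ne_zero hdp0 (pow_ne_zero _ hc0)
  have hab0 : a + b ≠ 0 := by
    intro h
    apply hrhs0
    rw [← hkeyeq, h, zero_mul]
  have hprod0 : (∏ k ∈ Finset.Ico 1 (s + 1), (a ^ 2 + e k * a * b + b ^ 2)) ≠ 0 := by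
    intro h
    apply hrhs0
    rw [← hkeyeq, h, mul_zero]
  have hFk0 : ∀ k ∈ Finset.Ico 1 (s + 1), (a ^ 2 + e k * a * b + b ^ 2) ≠ 0 :=
    Finset.prod_ne_zero_iff.mp hprod0
  -- valuation bookkeeping
  have hcKp0 : algebraMap (𝓞 Kp) Kp c ≠ 0 := RingOfIntegers.coe_ne_zero_iff.mpr hc0
  have hveq : vP P (algebraMap (𝓞 Kp) Kp (a + b))
      + ∑ k ∈ Finset.Ico 1 (s + 1), vP P (algebraMap (𝓞 Kp) Kp (a ^ 2 + e k * a * b + b ^ 2))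
      = (p : ℤ) * vP P (algebraMap (𝓞 Kp) Kp c) := by
    have h := congrArg (algebraMap (𝓞 Kp) Kp) hkeyeq
    rw [map_mul, map_mul, map_pow, map_prod] at h
    have hv := congrArg (vP P) h
    rw [vP_mul P (RingOfIntegers.coe_ne_zero_iff.mpr hab0)
        (Finset.prod_ne_zero_iff.mpr fun k hk => RingOfIntegers.coe_ne_zero_iff.mpr (hFk0 k hk)),
      vP_prod P _ _ (fun k hk => RingOfIntegers.coe_ne_zero_iff.mpr (hFk0 k hk)),
      vP_mul P (RingOfIntegers.coe_ne_zero_iff.mpr hdp0) (pow_ne_zero _ hcKp0),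
      vP_pow P hcKp0, vP_eq_zero_of_not_mem P hdp0 hdpP, zero_add] at hv
    exact hv
  have hk1s : k₁ ≤ s := by omega
  have hnotk : ∀ k, k ≤ s → k ≠ k₁ → (a ^ 2 + e k * a * b + b ^ 2) ∉ P.asIdeal := by
    intro k hk hne hmem
    have hdiff : (a ^ 2 + e k * a * b + b ^ 2) - (a ^ 2 + e k₁ * a * b + b ^ 2)
        = (e k - e k₁) * (a * b) := by ring
    have hdmem : (e k - e k₁) * (a * b) ∈ P.asIdeal := by
      rw [← hdiff]
      exact Ideal.sub_mem _ hmem hPf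
    rcases P.isPrime.mem_or_mem hdmem with h | h
    · exact hkey' k k₁ hne hk hk1s h
    · exact habP h
  have hvc1 : 1 ≤ vP P (algebraMap (𝓞 Kp) Kp c) := (vP_pos_iff P hc0).mpr hPc
  -- the main case analysis
  obtain ⟨hFk₁0, hM1, hM2⟩ :
      (a ^ 2 + e k₁ * a * b + b ^ 2) ≠ 0 ∧
      ((p : ℤ) ∣ vP P (algebraMap (𝓞 Kp) Kp (a ^ 2 + e k₁ * a * b + b ^ 2))) ∧
      ((p : ℤ) * vP P (algebraMap (𝓞 Kp) Kp c)
        ≤ vP P (algebraMap (𝓞 Kp) Kp (a ^ 2 + e k₁ * a * b + b ^ 2))) := by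
    have hppos : (0:ℤ) < (p:ℤ) := by exact_mod_cast hp.pos
    have hpvc : (p : ℤ) * 1 ≤ (p:ℤ) * vP P (algebraMap (𝓞 Kp) Kp c) :=
      mul_le_mul_of_nonneg_left hvc1 (le_of_lt hppos)
    rcases Nat.eq_zero_or_pos k₁ with hk10 | hk11
    · -- k₁ = 0
      subst hk10
      have habm : a + b ∈ P.asIdeal := by
        apply P.isPrime.mem_of_pow_mem 2
        rw [← hsq0]
        exact hPf
      have hzero : ∀ k ∈ Finset.Ico 1 (s + 1),
          vP P (algebraMap (𝓞 Kp) Kp (a ^ 2 + e k * a * b + b ^ 2)) = 0 := by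
        intro k hk
        simp only [Finset.mem_Ico] at hk
        exact vP_eq_zero_of_not_mem P (hFk0 k (by simp only [Finset.mem_Ico]; omega))
          (hnotk k (by omega) (by omega))
      have hsum0 : ∑ k ∈ Finset.Ico 1 (s + 1),
          vP P (algebraMap (𝓞 Kp) Kp (a ^ 2 + e k * a * b + b ^ 2)) = 0 := by
        apply Finset.sum_eq_zero
        intro k hk
        exact hzero k hk
      have hvab : vP P (algebraMap (𝓞 Kp) Kp (a + b))
          = (p : ℤ) * vP P (algebraMap (𝓞 Kp) Kp c) := by
        rw [hsum0, add_zero] at hveq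
        exact hveq
      have hvF : vP P (algebraMap (𝓞 Kp) Kp (a ^ 2 + e 0 * a * b + b ^ 2))
          = 2 * ((p : ℤ) * vP P (algebraMap (𝓞 Kp) Kp c)) := by
        rw [hsq0, map_pow, vP_pow P (RingOfIntegers.coe_ne_zero_iff.mpr hab0), hvab]
        push_cast
        ring
      refine ⟨by rw [hsq0]; exact pow_ne_zero _ hab0, ?_, ?_⟩
      · rw [hvF]
        exact ⟨2 * vP P (algebraMap (𝓞 Kp) Kp c), by ring⟩
      · rw [hvF]
        linarith
    · -- k₁ ≥ 1
      have habnot : a + b ∉ P.asIdeal := by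
        intro hmem
        have hdiff : (a ^ 2 + e k₁ * a * b + b ^ 2) - (a ^ 2 + e 0 * a * b + b ^ 2)
            = (e k₁ - e 0) * (a * b) := by ring
        have hsqm : (a ^ 2 + e 0 * a * b + b ^ 2) ∈ P.asIdeal := by
          rw [hsq0]
          exact Ideal.pow_mem_of_mem _ hmem 2 (by norm_num)
        have hdmem : (e k₁ - e 0) * (a * b) ∈ P.asIdeal := by
          rw [← hdiff]
          exact Ideal.sub_mem _ hPf hsqm
        rcases P.isPrime.mem_or_mem hdmem with h | h
        · exact hkey k₁ 0 hk11 hk1s h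
        · exact habP h
      have hk₁mem : k₁ ∈ Finset.Ico 1 (s + 1) := by
        simp only [Finset.mem_Ico]; omega
      have hsum1 : ∑ k ∈ Finset.Ico 1 (s + 1),
          vP P (algebraMap (𝓞 Kp) Kp (a ^ 2 + e k * a * b + b ^ 2))
          = vP P (algebraMap (𝓞 Kp) Kp (a ^ 2 + e k₁ * a * b + b ^ 2)) := by
        apply Finset.sum_eq_single_of_mem k₁ hk₁mem
        intro k hk hne
        simp only [Finset.mem_Ico] at hk
        exact vP_eq_zero_of_not_mem P (hFk0 k (by simp only [Finset.mem_Ico]; omega))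
          (hnotk k (by omega) hne)
      have hvab0 : vP P (algebraMap (𝓞 Kp) Kp (a + b)) = 0 :=
        vP_eq_zero_of_not_mem P hab0 habnot
      have hvF : vP P (algebraMap (𝓞 Kp) Kp (a ^ 2 + e k₁ * a * b + b ^ 2))
          = (p : ℤ) * vP P (algebraMap (𝓞 Kp) Kp c) := by
        rw [hvab0, zero_add] at hveq
        rw [← hsum1]
        exact hveq
      exact ⟨hFk0 k₁ hk₁mem, by rw [hvF]; exact Dvd.intro _ rfl, le_of_eq hvF.symm⟩
  -- final valuation computations
  have hU32 : (e k₃ - e k₂) ∉ P.asIdeal := hkey k₃ k₂ h23 h3s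
  have hU13 : (e k₁ - e k₃) ∉ P.asIdeal := hkey' k₁ k₃ (by omega) hk1s h3s
  have hU21 : (e k₂ - e k₁) ∉ P.asIdeal := hkey k₂ k₁ h12 h2s
  have hF2 : (a ^ 2 + e k₂ * a * b + b ^ 2) ∉ P.asIdeal := hnotk k₂ h2s (by omega)
  have hF3 : (a ^ 2 + e k₃ * a * b + b ^ 2) ∉ P.asIdeal := hnotk k₃ h3s (by omega)
  have hA0 : A ≠ 0 := by
    rw [hA]
    exact mul_ne_zero (hne_of_not _ hU32) hFk₁0
  have hB0 : B ≠ 0 := by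
    rw [hB]
    exact mul_ne_zero (hne_of_not _ hU13) (hne_of_not _ hF2)
  have hC0 : C ≠ 0 := by
    rw [hC]
    exact mul_ne_zero (hne_of_not _ hU21) (hne_of_not _ hF3)
  have hAmem : A ∈ P.asIdeal := hA ▸ Ideal.mul_mem_left _ _ hPf
  have hBnot : B ∉ P.asIdeal := by
    rw [hB]
    intro h
    exact (P.isPrime.mem_or_mem h).elim hU13 hF2
  have hCnot : C ∉ P.asIdeal := by
    rw [hC]
    intro h
    exact (P.isPrime.mem_or_mem h).elim hU21 hF3
  have hSnot : (A * B + B * C + C * A) ∉ P.asIdeal := by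
    intro hmem
    have h1 : A * (B + C) ∈ P.asIdeal := Ideal.mul_mem_right _ _ hAmem
    have h2 : B * C ∈ P.asIdeal := by
      have hr : B * C = (A * B + B * C + C * A) - A * (B + C) := by ring
      rw [hr]
      exact Ideal.sub_mem _ hmem h1
    exact (P.isPrime.mem_or_mem h2).elim hBnot hCnot
  have hS0 : (A * B + B * C + C * A) ≠ 0 := hne_of_not _ hSnot
  have hT0 : A * B * C ≠ 0 := mul_ne_zero (mul_ne_zero hA0 hB0) hC0
  have hvA : vP P (algebraMap (𝓞 Kp) Kp A)
      = vP P (algebraMap (𝓞 Kp) Kp (a ^ 2 + e k₁ * a * b + b ^ 2)) := by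
    rw [hA, map_mul,
      vP_mul P (RingOfIntegers.coe_ne_zero_iff.mpr (hne_of_not _ hU32))
        (RingOfIntegers.coe_ne_zero_iff.mpr hFk₁0),
      vP_eq_zero_of_not_mem P (hne_of_not _ hU32) hU32, zero_add]
  have hvB : vP P (algebraMap (𝓞 Kp) Kp B) = 0 := by
    rw [hB, map_mul,
      vP_mul P (RingOfIntegers.coe_ne_zero_iff.mpr (hne_of_not _ hU13))
        (RingOfIntegers.coe_ne_zero_iff.mpr (hne_of_not _ hF2)),
      vP_eq_zero_of_not_mem P (hne_of_not _ hU13) hU13,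
      vP_eq_zero_of_not_mem P (hne_of_not _ hF2) hF2]
    norm_num
  have hvC : vP P (algebraMap (𝓞 Kp) Kp C) = 0 := by
    rw [hC, map_mul,
      vP_mul P (RingOfIntegers.coe_ne_zero_iff.mpr (hne_of_not _ hU21))
        (RingOfIntegers.coe_ne_zero_iff.mpr (hne_of_not _ hF3)),
      vP_eq_zero_of_not_mem P (hne_of_not _ hU21) hU21,
      vP_eq_zero_of_not_mem P (hne_of_not _ hF3) hF3]
    norm_num
  have hvS : vP P (algebraMap (𝓞 Kp) Kp (A * B + B * C + C * A)) = 0 :=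
    vP_eq_zero_of_not_mem P hS0 hSnot
  have hvT : vP P (algebraMap (𝓞 Kp) Kp (A * B * C))
      = vP P (algebraMap (𝓞 Kp) Kp (a ^ 2 + e k₁ * a * b + b ^ 2)) := by
    rw [map_mul, map_mul,
      vP_mul P (mul_ne_zero (RingOfIntegers.coe_ne_zero_iff.mpr hA0)
          (RingOfIntegers.coe_ne_zero_iff.mpr hB0))
        (RingOfIntegers.coe_ne_zero_iff.mpr hC0),
      vP_mul P (RingOfIntegers.coe_ne_zero_iff.mpr hA0)
        (RingOfIntegers.coe_ne_zero_iff.mpr hB0),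
      hvA, hvB, hvC]
    ring
  have h2Kp : (2 : Kp) ≠ 0 := two_ne_zero
  have hn1 : 1 ≤ vP P (2 : Kp) := by
    have h2O : (2 : 𝓞 Kp) ≠ 0 := two_ne_zero
    have := (vP_pos_iff P h2O).mpr hP2
    rwa [map_ofNat] at this
  have hSKp0 : ((A * B + B * C + C * A : 𝓞 Kp) : Kp) ≠ 0 :=
    RingOfIntegers.coe_ne_zero_iff.mpr hS0
  have hTKp0 : ((A * B * C : 𝓞 Kp) : Kp) ≠ 0 :=
    RingOfIntegers.coe_ne_zero_iff.mpr hT0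
  have hvj : vP P j
      = 8 * vP P (2 : Kp) - 2 * vP P (algebraMap (𝓞 Kp) Kp (a ^ 2 + e k₁ * a * b + b ^ 2)) := by
    rw [hj, vP_div P (mul_ne_zero (pow_ne_zero 8 h2Kp) (pow_ne_zero 3 hSKp0))
        (pow_ne_zero 2 hTKp0),
      vP_mul P (pow_ne_zero 8 h2Kp) (pow_ne_zero 3 hSKp0),
      vP_pow P h2Kp 8, vP_pow P hSKp0 3, vP_pow P hTKp0 2]
    rw [show vP P ((A * B + B * C + C * A : 𝓞 Kp) : Kp)
        = vP P (algebraMap (𝓞 Kp) Kp (A * B + B * C + C * A)) from rfl, hvS]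
    rw [show vP P ((A * B * C : 𝓞 Kp) : Kp)
        = vP P (algebraMap (𝓞 Kp) Kp (A * B * C)) from rfl, hvT]
    push_cast
    ring
  have hppos : (0:ℤ) < (p:ℤ) := by exact_mod_cast hp.pos
  constructor
  · rw [hvj]
    have hpvc : (p : ℤ) * 1 ≤ (p:ℤ) * vP P (algebraMap (𝓞 Kp) Kp c) :=
      mul_le_mul_of_nonneg_left hvc1 (le_of_lt hppos)
    linarith
  · rw [hvj]
    intro hdvd
    have h8n : (p:ℤ) ∣ 8 * vP P (2 : Kp) := by
      have hre : (8 * vP P (2 : Kp) : ℤ)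
          = (8 * vP P (2 : Kp)
            - 2 * vP P (algebraMap (𝓞 Kp) Kp (a ^ 2 + e k₁ * a * b + b ^ 2)))
          + 2 * vP P (algebraMap (𝓞 Kp) Kp (a ^ 2 + e k₁ * a * b + b ^ 2)) := by ring
      rw [hre]
      exact dvd_add hdvd (Dvd.dvd.mul_left hM1 2)
    have hpp : Prime (p:ℤ) := Nat.prime_iff_prime_int.mp hp
    rcases hpp.dvd_mul.mp h8n with h8 | hn
    · have h8' : p ∣ 8 := by exact_mod_cast h8
      have hp2 : p = 2 := by
        have := hp.dvd_of_dvd_pow (show p ∣ 2 ^ 3 by norm_num; exact h8')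
        exact (Nat.prime_dvd_prime_iff_eq hp Nat.prime_two).mp this
      rw [hp2] at hp4
      norm_num at hp4
      linarith
    · have hle : (p:ℤ) ≤ vP P (2 : Kp) := Int.le_of_dvd (by linarith) hn
      linarith
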